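/- Suppose ρ₁ = ρ₂ = ρ with ρ⁻¹ = t an integer divisible by p. Let λ₁ ∈ L_{i₁} and λ₂ ∈ L_{i₂} for positive integers i₁, i₂, and suppose λ₂ − λ₁ lies in the zero set of μ̂_{M,D}, say λ₂ − λ₁ ∈ L_i for some positive integer i. Then: if i₁ ≠ i₂, necessarily i = min{i₁, i₂}; if i₁ = i₂, necessarily i ≥ i₁. -/
import Mathlib


open MeasureTheory Complex Matrix
open scoped ENNReal

noncomputable section

/-- The exponential function `e_λ(x) = e^{-2πi⟨λ,x⟩}` on `ℝ²`. -/
def expChar (lam x : Fin 2 → ℝ) : ℂ :=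
  Complex.exp ((-2 * Real.pi * Complex.I) * ((lam 0 * x 0 + lam 1 * x 1 : ℝ) : ℂ))

/-- The Fourier transform `μ̂(ξ) = ∫ e^{-2πi⟨ξ,x⟩} dμ(x)` of a measure on `ℝ²`. -/
def ftMeasure (μ : Measure (Fin 2 → ℝ)) (ξ : Fin 2 → ℝ) : ℂ :=
  ∫ x, expChar ξ x ∂μ

/-- The mask `m_D(ξ) = (1/p) Σ_{d∈D} e^{-2πi⟨ξ,d⟩}` of a digit system `D : Fin p → ℝ²`. -/
def mask {p : ℕ} (D : Fin p → (Fin 2 → ℝ)) (ξ : Fin 2 → ℝ) : ℂ :=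
  (p : ℂ)⁻¹ * ∑ i : Fin p, expChar ξ (D i)

/-- Integer digits, coerced to real vectors. -/
def digitR {p : ℕ} (D : Fin p → (Fin 2 → ℤ)) : Fin p → (Fin 2 → ℝ) :=
  fun i j => (D i j : ℝ)

/-- `μ` is the self-affine measure of the IFS `φ_d(x) = M⁻¹(x+d)`, `d ∈ D`:
a compactly supported Borel probability measure with `μ = (1/#D) Σ_d μ ∘ φ_d⁻¹`. -/
def IsSelfAffine {p : ℕ} (μ : Measure (Fin 2 → ℝ)) (M : Matrix (Fin 2) (Fin 2) ℝ)
    (D : Fin p → (Fin 2 → ℝ)) : Prop :=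
  IsProbabilityMeasure μ ∧ (∃ K : Set (Fin 2 → ℝ), IsCompact K ∧ μ Kᶜ = 0) ∧
  μ = (p : ℝ≥0∞)⁻¹ • ∑ i : Fin p, μ.map (fun x => M⁻¹.mulVec (x + D i))

/-- `Λ` is an orthogonal set of exponentials for `μ`. -/
def IsOrthoSet (μ : Measure (Fin 2 → ℝ)) (Λ : Set (Fin 2 → ℝ)) : Prop :=
  ∀ l ∈ Λ, ∀ l' ∈ Λ, l ≠ l' → ftMeasure μ (l - l') = 0

/-- `μ` is a spectral measure: some countable set of exponentials forms an
orthonormal (Hilbert) basis of `L²(μ)`. -/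
def IsSpectral (μ : Measure (Fin 2 → ℝ)) : Prop :=
  ∃ Λ : Set (Fin 2 → ℝ), Λ.Countable ∧
    ∃ b : HilbertBasis Λ ℂ (Lp ℂ 2 μ),
      ∀ lam : Λ, ⇑(b lam) =ᵐ[μ] expChar (lam : Fin 2 → ℝ)

/-- The standing assumption on the digit set: `a = (a₁,a₂)` has entries in `[1,p-1]`
and `Z(m_D) = ⋃_{j=1}^{p-1} (j·a/p + ℤ²)`. -/
def ZeroSetCond (p : ℕ) (D : Fin p → (Fin 2 → ℤ)) (a : Fin 2 → ℤ) : Prop :=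
  (∀ i, 1 ≤ a i ∧ a i ≤ (p : ℤ) - 1) ∧
  ∀ ξ : Fin 2 → ℝ, mask (digitR D) ξ = 0 ↔
    ∃ j : ℕ, 1 ≤ j ∧ j ≤ p - 1 ∧ ∃ k : Fin 2 → ℤ,
      ∀ i, ξ i = (j : ℝ) * (a i : ℝ) / p + (k i : ℝ)

/-- The upper-triangular expanding matrix `M = [[ρ₁⁻¹, c],[0, ρ₂⁻¹]]`. -/
def Mupper (ρ₁ ρ₂ c : ℝ) : Matrix (Fin 2) (Fin 2) ℝ := !![ρ₁⁻¹, c; 0, ρ₂⁻¹]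

/-- The set `E_a = {h/l : gcd(h,l)=1, l·a₂ − h·a₁ ∈ ℤ∖pℤ} ∪ {0}`. -/
def Ea (p : ℕ) (a : Fin 2 → ℤ) : Set ℝ :=
  {x | ∃ h l : ℤ, Int.gcd h l = 1 ∧ ¬ ((p : ℤ) ∣ (l * a 1 - h * a 0)) ∧
    x = (h : ℝ) / (l : ℝ)} ∪ {0}



/-- Auxiliary: cancel a common power of `t`. -/
lemma cancelPow_aux (t : ℤ) (ht : t ≠ 0) {m n : ℕ} (h : m ≤ n) :
    t ^ n = t ^ m * t ^ (n - m) := by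
  rw [← pow_add]; congr 1; omega

lemma notDvdB_aux (p : ℕ) (hp : p.Prime) (j : ℕ) (hj1 : 1 ≤ j) (hj2 : j ≤ p - 1)
    (a0 k : ℤ) (ha1 : 1 ≤ a0) (ha2 : a0 ≤ (p : ℤ) - 1) :
    ¬ (p : ℤ) ∣ ((j : ℤ) * a0 + p * k) := by
  intro h
  have hpj : (p : ℤ) ∣ (j : ℤ) * a0 := by
    have h3 : (j : ℤ) * a0 = ((j : ℤ) * a0 + p * k) - p * k := by ring
    rw [h3]; exact dvd_sub h (dvd_mul_right _ _)
  have hpZ : Prime (p : ℤ) := Nat.prime_iff_prime_int.mp hp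
  have h2le := hp.two_le
  rcases hpZ.2.2 _ _ hpj with h4 | h4
  · have h5 : (p : ℤ) ≤ (j : ℤ) := Int.le_of_dvd (by exact_mod_cast hj1) h4
    omega
  · have h5 : (p : ℤ) ≤ a0 := Int.le_of_dvd (by omega) h4
    omega

lemma keyNT_aux (p t : ℤ) (ht : t ≠ 0) (hpt : p ∣ t)
    (i₁ i₂ i : ℕ) (B₁ B₂ B : ℤ)
    (h₁ : ¬ p ∣ B₁) (h₂ : ¬ p ∣ B₂) (hB : ¬ p ∣ B)
    (heq : t ^ i * B = t ^ i₂ * B₂ - t ^ i₁ * B₁) :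
    (i₁ ≠ i₂ → i = min i₁ i₂) ∧ (i₁ = i₂ → i₁ ≤ i) := by
  have hdvd : ∀ k : ℕ, 1 ≤ k → ∀ x : ℤ, p ∣ t ^ k * x := fun k hk x =>
    Dvd.dvd.mul_right (dvd_pow hpt (by omega)) x
  have caseA : i < i₁ → i < i₂ → False := by
    intro h1 h2
    apply hB
    have hBeq : B = t ^ (i₂ - i) * B₂ - t ^ (i₁ - i) * B₁ := by
      apply mul_left_cancel₀ (pow_ne_zero i ht)
      have e1 := cancelPow_aux t ht h1.le (m := i) (n := i₁)
      have e2 := cancelPow_aux t ht h2.le (m := i) (n := i₂)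
      linear_combination heq + B₂ * e2 - B₁ * e1
    rw [hBeq]
    exact dvd_sub (hdvd _ (by omega) _) (hdvd _ (by omega) _)
  constructor
  · intro hne
    rcases lt_or_gt_of_ne hne with hlt | hlt
    · -- i₁ < i₂, show i = i₁
      have : ¬ i < i₁ := fun h => caseA h (h.trans hlt)
      have : ¬ i₁ < i := by
        intro h
        apply h₁
        have hBeq : B₁ = t ^ (i₂ - i₁) * B₂ - t ^ (i - i₁) * B := by
          apply mul_left_cancel₀ (pow_ne_zero i₁ ht)
          have e1 := cancelPow_aux t ht hlt.le (m := i₁) (n := i₂)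
          have e2 := cancelPow_aux t ht h.le (m := i₁) (n := i)
          linear_combination heq + B₂ * e1 - B * e2
        rw [hBeq]
        exact dvd_sub (hdvd _ (by omega) _) (hdvd _ (by omega) _)
      omega
    · -- i₂ < i₁, show i = i₂
      have : ¬ i < i₂ := fun h => caseA (h.trans hlt) h
      have : ¬ i₂ < i := by
        intro h
        apply h₂
        have hBeq : B₂ = t ^ (i - i₂) * B + t ^ (i₁ - i₂) * B₁ := by
          apply mul_left_cancel₀ (pow_ne_zero i₂ ht)
          have e1 := cancelPow_aux t ht hlt.le (m := i₂) (n := i₁)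
          have e2 := cancelPow_aux t ht h.le (m := i₂) (n := i)
          linear_combination -heq + B * e2 + B₁ * e1
        rw [hBeq]
        exact dvd_add (hdvd _ (by omega) _) (hdvd _ (by omega) _)
      omega
  · intro he12
    by_contra hcon
    exact caseA (by omega) (by omega)

lemma powEntry_aux (ρ c : ℝ) (n : ℕ) :
    ((Mupper ρ ρ c)ᵀ ^ n) 0 0 = (ρ⁻¹) ^ n ∧ ((Mupper ρ ρ c)ᵀ ^ n) 0 1 = 0 := by
  have h00 : (Mupper ρ ρ c)ᵀ 0 0 = ρ⁻¹ := rfl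
  have h01 : (Mupper ρ ρ c)ᵀ 0 1 = 0 := rfl
  have h10 : (Mupper ρ ρ c)ᵀ 1 0 = c := rfl
  have h11 : (Mupper ρ ρ c)ᵀ 1 1 = ρ⁻¹ := rfl
  induction n with
  | zero => simp [Matrix.one_apply]
  | succ n ih =>
    rw [pow_succ]
    constructor
    · simp only [Matrix.mul_apply, Fin.sum_univ_two, ih.1, ih.2, h00, h01, h10, h11, pow_succ]
      ring
    · simp only [Matrix.mul_apply, Fin.sum_univ_two, ih.1, ih.2, h00, h01, h10, h11]
      ring

lemma mulVec_zero_aux (ρ c : ℝ) (n : ℕ) (η : Fin 2 → ℝ) :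
    (((Mupper ρ ρ c)ᵀ ^ n).mulVec η) 0 = (ρ⁻¹) ^ n * η 0 := by
  have h := powEntry_aux ρ c n
  simp [Matrix.mulVec, dotProduct, Fin.sum_univ_two, h.1, h.2]


/-- Lemma 4.6: with `ρ₁ = ρ₂ = ρ`, `ρ⁻¹ = t ∈ pℤ`, if `λ₁ ∈ L_{i₁}`, `λ₂ ∈ L_{i₂}` and
`λ₂ − λ₁ ∈ L_i`, then `i = min{i₁,i₂}` when `i₁ ≠ i₂`, and `i ≥ i₁` when `i₁ = i₂`. -/
theorem stmt17 (p : ℕ) (hp : p.Prime) (ρ c : ℝ) (hρ0 : 0 < ρ) (hρ1 : ρ < 1)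
    (D : Fin p → (Fin 2 → ℤ)) (hD : Function.Injective D)
    (a : Fin 2 → ℤ) (hZ : ZeroSetCond p D a)
    (t : ℤ) (ht : ρ⁻¹ = (t : ℝ)) (hpt : (p : ℤ) ∣ t)
    (L : ℕ → Set (Fin 2 → ℝ))
    (hL : ∀ i, L i = {ξ | ∃ η, mask (digitR D) η = 0 ∧ ξ = ((Mupper ρ ρ c)ᵀ ^ i).mulVec η})
    (i₁ i₂ i : ℕ) (hi₁ : 1 ≤ i₁) (hi₂ : 1 ≤ i₂) (hi : 1 ≤ i)
    (lam₁ lam₂ : Fin 2 → ℝ) (hlam₁ : lam₁ ∈ L i₁) (hlam₂ : lam₂ ∈ L i₂)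
    (hdiff : lam₂ - lam₁ ∈ L i) :
    (i₁ ≠ i₂ → i = min i₁ i₂) ∧ (i₁ = i₂ → i₁ ≤ i) := by
  have hpne : (p : ℝ) ≠ 0 := Nat.cast_ne_zero.mpr hp.pos.ne'
  have htne : t ≠ 0 := by
    have h0 : (t : ℝ) ≠ 0 := by rw [← ht]; exact inv_ne_zero hρ0.ne'
    exact_mod_cast h0
  rw [hL i₁] at hlam₁
  rw [hL i₂] at hlam₂
  rw [hL i] at hdiff
  obtain ⟨η₁, hm₁, he₁⟩ := hlam₁
  obtain ⟨η₂, hm₂, he₂⟩ := hlam₂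
  obtain ⟨η, hm, he⟩ := hdiff
  obtain ⟨j₁, hj₁a, hj₁b, k₁, hk₁⟩ := (hZ.2 η₁).mp hm₁
  obtain ⟨j₂, hj₂a, hj₂b, k₂, hk₂⟩ := (hZ.2 η₂).mp hm₂
  obtain ⟨j, hja, hjb, k, hk⟩ := (hZ.2 η).mp hm
  have hl₁ : lam₁ 0 = (t : ℝ) ^ i₁ * ((j₁ : ℝ) * (a 0 : ℝ) / p + (k₁ 0 : ℝ)) := by
    rw [he₁, mulVec_zero_aux, ht, hk₁ 0]
  have hl₂ : lam₂ 0 = (t : ℝ) ^ i₂ * ((j₂ : ℝ) * (a 0 : ℝ) / p + (k₂ 0 : ℝ)) := by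
    rw [he₂, mulVec_zero_aux, ht, hk₂ 0]
  have hld : lam₂ 0 - lam₁ 0 = (t : ℝ) ^ i * ((j : ℝ) * (a 0 : ℝ) / p + (k 0 : ℝ)) := by
    have h0 := congrFun he 0
    simp only [Pi.sub_apply] at h0
    rw [h0, mulVec_zero_aux, ht, hk 0]
  have hreal : (t : ℝ) ^ i * ((j : ℝ) * (a 0 : ℝ) / p + (k 0 : ℝ))
      = (t : ℝ) ^ i₂ * ((j₂ : ℝ) * (a 0 : ℝ) / p + (k₂ 0 : ℝ))
        - (t : ℝ) ^ i₁ * ((j₁ : ℝ) * (a 0 : ℝ) / p + (k₁ 0 : ℝ)) := by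
    rw [← hl₁, ← hl₂, ← hld]
  have hint : t ^ i * ((j : ℤ) * a 0 + p * k 0)
      = t ^ i₂ * ((j₂ : ℤ) * a 0 + p * k₂ 0) - t ^ i₁ * ((j₁ : ℤ) * a 0 + p * k₁ 0) := by
    have h2 : ((t ^ i * ((j : ℤ) * a 0 + p * k 0) : ℤ) : ℝ)
        = ((t ^ i₂ * ((j₂ : ℤ) * a 0 + p * k₂ 0) - t ^ i₁ * ((j₁ : ℤ) * a 0 + p * k₁ 0) : ℤ) : ℝ) := by
      push_cast
      field_simp at hreal ⊢
      linarith [hreal]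
    exact_mod_cast h2
  have ha0 := hZ.1 0
  exact keyNT_aux p t htne hpt i₁ i₂ i _ _ _
    (notDvdB_aux p hp j₁ hj₁a hj₁b (a 0) (k₁ 0) ha0.1 ha0.2)
    (notDvdB_aux p hp j₂ hj₂a hj₂b (a 0) (k₂ 0) ha0.1 ha0.2)
    (notDvdB_aux p hp j hja hjb (a 0) (k 0) ha0.1 ha0.2) hint


end
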